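/- Let p be a prime, G a finite p-group, k = ZMod p, and kG the group algebra MonoidAlgebra k G with Jacobson radical J. Let A be a finite type and φ : FreeAlgebra k A →ₐ[k] kG a surjective k-algebra homomorphism with φ(x_a) ∈ J for every generator x_a. Let ≤ be an admissible linear order on the free monoid M of words in A, and call a word w a tip if φ(w) lies in the k-span of {φ(v) : v < w}, and a nontip otherwise. Then the family (φ(w))_{w a nontip} is a k-basis of kG. -/

import Mathlib

/-- The monomial in the free algebra corresponding to a word in the free monoid. -/
noncomputable def wordMonomial (k : Type*) [CommRing k] {A : Type*} (w : FreeMonoid A) :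
    FreeAlgebra k A :=
  FreeMonoid.lift (FreeAlgebra.ι k) w

section Aux

variable {R : Type*} [Ring R]

/-- The Jacobson radical of `⊥` is closed under right multiplication. -/
lemma auxJ_mul_right {x : R} (hx : x ∈ (⊥ : Ideal R).jacobson) (y : R) :
    x * y ∈ (⊥ : Ideal R).jacobson :=
  Ideal.mul_mem_right y _ hx

/-- In a finite ring, `1 - a` is a unit for `a` in the Jacobson radical. -/
lemma aux_isUnit_one_sub [Finite R] {a : R} (ha : a ∈ (⊥ : Ideal R).jacobson) :
    IsUnit (1 - a) := by
  obtain ⟨s, hs⟩ := Ideal.exists_mul_sub_mem_of_sub_one_mem_jacobson (1 - a)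
    (by simpa using ((⊥ : Ideal R).jacobson.neg_mem ha))
  rw [Ideal.mem_bot, sub_eq_zero] at hs
  have hsurj : Function.Surjective (fun x : R => s * x) := fun y =>
    ⟨(1 - a) * y, by simp only [← mul_assoc, hs, one_mul]⟩
  have hinj : Function.Injective (fun x : R => s * x) :=
    Finite.injective_iff_surjective.mpr hsurj
  have h2 : (1 - a) * s = 1 := by
    apply hinj
    show s * ((1 - a) * s) = s * 1
    rw [← mul_assoc, hs, one_mul, mul_one]
  exact ⟨⟨1 - a, s, h2, hs⟩, rfl⟩

/-- Nakayama-type lemma for finite (possibly noncommutative) rings. -/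
lemma aux_nakayama [Finite R] (N : Submodule R R)
    (hN : N ≤ Submodule.span R {z : R | ∃ x ∈ (⊥ : Ideal R).jacobson, ∃ y ∈ N, z = x * y}) :
    N = ⊥ := by
  classical
  set J := (⊥ : Ideal R).jacobson with hJdef
  -- coefficient extraction: if N is contained in the span of a finite set s, then every
  -- element of N is a combination of elements of s with coefficients in J
  have step0 : ∀ s : Finset R, N ≤ Submodule.span R (↑s : Set R) → ∀ z,
      z ∈ Submodule.span R {z : R | ∃ x ∈ J, ∃ y ∈ N, z = x * y} →
      ∃ f : R → R, (∀ t, f t ∈ J) ∧ z = ∑ t ∈ s, f t * t := by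
    intro s hs z hz'
    induction hz' using Submodule.span_induction with
    | mem u hu =>
      obtain ⟨x, hx, y, hy, rfl⟩ := hu
      have hy' : y ∈ Submodule.span R (↑s : Set R) := hs hy
      rw [Submodule.mem_span_finset] at hy'
      obtain ⟨c, -, hc⟩ := hy'
      refine ⟨fun t => x * c t, fun t => auxJ_mul_right hx _, ?_⟩
      rw [← hc, Finset.mul_sum]
      refine Finset.sum_congr rfl fun t _ => ?_
      rw [smul_eq_mul, mul_assoc]
    | zero => exact ⟨0, fun t => J.zero_mem, by simp⟩
    | add u v hu hv ihu ihv =>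
      obtain ⟨f, hf, rfl⟩ := ihu
      obtain ⟨g, hg, rfl⟩ := ihv
      exact ⟨f + g, fun t => J.add_mem (hf t) (hg t), by
        simp [add_mul, Finset.sum_add_distrib]⟩
    | smul r u hu ihu =>
      obtain ⟨f, hf, rfl⟩ := ihu
      refine ⟨fun t => r * f t, fun t => J.mul_mem_left r (hf t), ?_⟩
      rw [smul_eq_mul, Finset.mul_sum]
      exact Finset.sum_congr rfl fun t _ => (mul_assoc _ _ _).symm
  -- main induction on the cardinality of a generating set
  have step : ∀ s : Finset R, N ≤ Submodule.span R (↑s : Set R) → ∀ z ∈ N,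
      ∃ f : R → R, (∀ t, f t ∈ J) ∧ z = ∑ t ∈ s, f t * t := fun s hs z hz =>
    step0 s hs z (hN hz)
  have main : ∀ n (s : Finset R), s.card = n → (↑s : Set R) ⊆ (N : Set R) →
      N ≤ Submodule.span R (↑s : Set R) → N = ⊥ := by
    intro n
    induction n with
    | zero =>
      intro s hcard _ hle
      rw [Finset.card_eq_zero] at hcard
      subst hcard
      simpa [Submodule.span_empty, le_bot_iff] using hle
    | succ n ih =>
      intro s hcard hsub hle
      have hne : s.Nonempty := Finset.card_pos.mp (by omega)
      obtain ⟨z, hzs⟩ := hne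
      have hzN : z ∈ N := hsub hzs
      obtain ⟨f, hf, hrep⟩ := step s hle z hzN
      have hsplit : z = f z * z + ∑ t ∈ s.erase z, f t * t := by
        rw [← Finset.add_sum_erase s (fun t => f t * t) hzs] at hrep
        exact hrep
      have hkey : (1 - f z) * z = ∑ t ∈ s.erase z, f t * t := by
        rw [sub_mul, one_mul, sub_eq_iff_eq_add']
        exact hsplit
      have hu : IsUnit (1 - f z) := aux_isUnit_one_sub (hf z)
      obtain ⟨u, hu'⟩ := hu
      have hzspan : z ∈ Submodule.span R (↑(s.erase z) : Set R) := by
        have hsum : ∑ t ∈ s.erase z, f t * t ∈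
            Submodule.span R (↑(s.erase z) : Set R) := by
          refine Submodule.sum_mem _ fun t ht => ?_
          have : t ∈ Submodule.span R (↑(s.erase z) : Set R) :=
            Submodule.subset_span ht
          simpa [smul_eq_mul] using Submodule.smul_mem _ (f t) this
        have : (↑u⁻¹ : R) • ((1 - f z) * z) ∈
            Submodule.span R (↑(s.erase z) : Set R) := by
          rw [hkey]
          exact Submodule.smul_mem _ _ hsum
        have huz : (↑u⁻¹ : R) • ((1 - f z) * z) = z := by
          rw [smul_eq_mul, ← mul_assoc, ← hu', Units.inv_mul, one_mul]
        rwa [huz] at this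
      refine ih (s.erase z) (by rw [Finset.card_erase_of_mem hzs, hcard]; rfl)
        (fun t ht => hsub (Finset.erase_subset _ _ ht)) ?_
      refine le_trans hle (Submodule.span_le.mpr fun t ht => ?_)
      rcases eq_or_ne t z with rfl | hne'
      · exact hzspan
      · exact Submodule.subset_span (Finset.mem_erase.mpr ⟨hne', ht⟩)
  -- apply with s = all of N
  have hfin : (N : Set R).Finite := Set.toFinite _
  refine main hfin.toFinset.card hfin.toFinset rfl ?_ ?_
  · intro t ht
    simpa using (Set.Finite.mem_toFinset hfin).mp ht
  · rw [Set.Finite.coe_toFinset]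
    exact (Submodule.span_eq N).symm.le

end Aux

/-- For a finite `p`-group `G`, `k = ZMod p`, a surjection
`φ : FreeAlgebra k A →ₐ[k] kG` with all generators landing in the Jacobson radical,
and an admissible linear order on the free monoid of words in `A`, the images of the
nontips form a `k`-basis of the group algebra `kG`. -/
theorem nontips_form_basis
    (p : ℕ) (hp : p.Prime) (G : Type*) [Group G] [Fintype G] (hG : IsPGroup p G)
    (A : Type*) [Finite A]
    (φ : FreeAlgebra (ZMod p) A →ₐ[ZMod p] MonoidAlgebra (ZMod p) G)
    (hsurj : Function.Surjective φ)
    (hrad : ∀ a : A, φ (FreeAlgebra.ι (ZMod p) a) ∈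
      (⊥ : Ideal (MonoidAlgebra (ZMod p) G)).jacobson)
    (lo : LinearOrder (FreeMonoid A))
    (hadm : ∀ u v₁ v₂ w : FreeMonoid A, lo.le v₁ v₂ →
      lo.le (u * v₁ * w) (u * v₂ * w))
    -- a word is a tip if its image lies in the span of the images of smaller words
    (IsTip : FreeMonoid A → Prop)
    (hTip : ∀ w, IsTip w ↔ φ (wordMonomial (ZMod p) w) ∈
      Submodule.span (ZMod p) ((fun v => φ (wordMonomial (ZMod p) v)) '' {v | lo.lt v w})) :
    LinearIndependent (ZMod p)
      (fun w : {w : FreeMonoid A // ¬ IsTip w} => φ (wordMonomial (ZMod p) w.1)) ∧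
    Submodule.span (ZMod p)
      (Set.range (fun w : {w : FreeMonoid A // ¬ IsTip w} =>
        φ (wordMonomial (ZMod p) w.1))) = ⊤ := by
  classical
  haveI : Fact p.Prime := ⟨hp⟩
  letI := lo
  set k := ZMod p
  set R := MonoidAlgebra k G with hRdef
  haveI : Finite R := by
    haveI : NeZero p := ⟨hp.ne_zero⟩
    haveI : Finite (G →₀ ZMod p) := Finite.of_fintype (G →₀ ZMod p)
    exact Finite.of_injective _ (MonoidAlgebra.coeff_injective (R := ZMod p) (M := G))
  set J := (⊥ : Ideal R).jacobson with hJdef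
  -- the descending chain of ideals
  set stp : Submodule R R → Submodule R R :=
    fun M => Submodule.span R {z : R | ∃ x ∈ J, ∃ y ∈ M, z = x * y} with hstep
  set P : ℕ → Submodule R R := fun m => stp^[m] ⊤ with hPdef
  have hPsucc : ∀ m, P (m + 1) = stp (P m) := fun m =>
    Function.iterate_succ_apply' stp m ⊤
  have hkey : ∀ (M : Submodule R R) (y), y ∈ stp M → ∀ x ∈ J, x * y ∈ stp M := by
    intro M y hy
    induction hy using Submodule.span_induction with
    | mem u hu =>
      obtain ⟨x', hx', y', hy', rfl⟩ := hu
      intro x hx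
      rw [← mul_assoc]
      exact Submodule.subset_span ⟨x * x', J.mul_mem_left x hx', y', hy', rfl⟩
    | zero => intro x _; rw [mul_zero]; exact (stp M).zero_mem
    | add u v _ _ ihu ihv =>
      intro x hx
      rw [mul_add]
      exact (stp M).add_mem (ihu x hx) (ihv x hx)
    | smul r u _ ihu =>
      intro x hx
      have : x * (r • u) = (x * r) * u := by
        rw [smul_eq_mul, mul_assoc]
      rw [this]
      exact ihu (x * r) (auxJ_mul_right hx r)
  have hdesc : ∀ m, P (m + 1) ≤ P m := by
    intro m
    cases m with
    | zero => exact le_top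
    | succ m =>
      rw [hPsucc (m + 1)]
      refine Submodule.span_le.mpr ?_
      rintro z ⟨x, hx, y, hy, rfl⟩
      have hy' : y ∈ stp (P m) := by rw [← hPsucc m]; exact hy
      show x * y ∈ P (m + 1)
      rw [hPsucc m]
      exact hkey (P m) y hy' x hx
  have hanti : Antitone P := antitone_nat_of_succ_le hdesc
  -- stabilization
  haveI : Finite (Submodule R R) :=
    Finite.of_injective (fun M : Submodule R R => (M : Set R)) SetLike.coe_injective
  obtain ⟨m, n, hmn, hPmn⟩ : ∃ m n, m < n ∧ P m = P n := by
    obtain ⟨m, n, hne, h⟩ := Finite.exists_ne_map_eq_of_infinite P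
    rcases lt_or_gt_of_ne hne with h' | h'
    · exact ⟨m, n, h', h⟩
    · exact ⟨n, m, h', h.symm⟩
  have hstab : P (m + 1) = P m := by
    refine le_antisymm (hdesc m) ?_
    rw [hPmn]
    exact hanti hmn
  -- Nakayama: P m = ⊥
  have hPbot : P m = ⊥ := by
    refine aux_nakayama (P m) ?_
    conv_lhs => rw [← hstab]
    rw [hPsucc m]
  -- words land in the chain
  have hword : ∀ l : List A, φ ((l.map (FreeAlgebra.ι k)).prod) ∈ P l.length := by
    intro l
    induction l with
    | nil => simp [hPdef]
    | cons a l ih =>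
      rw [List.map_cons, List.prod_cons, map_mul, List.length_cons, hPsucc]
      exact Submodule.subset_span ⟨_, hrad a, _, ih, rfl⟩
  have hwm : ∀ w : FreeMonoid A, wordMonomial k w =
      ((FreeMonoid.toList w).map (FreeAlgebra.ι k)).prod := fun w =>
    FreeMonoid.lift_apply _ _
  have hzero : ∀ w : FreeMonoid A, m ≤ (FreeMonoid.toList w).length →
      φ (wordMonomial k w) = 0 := by
    intro w hw
    have h1 : φ (wordMonomial k w) ∈ P (FreeMonoid.toList w).length := by
      rw [hwm w]; exact hword _
    have h2 : P (FreeMonoid.toList w).length ≤ P m := hanti hw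
    have := h2 h1
    rwa [hPbot, Submodule.mem_bot] at this
  -- the span of nontip images
  set T : Submodule k R := Submodule.span k
    (Set.range (fun w : {w : FreeMonoid A // ¬ IsTip w} => φ (wordMonomial k w.1))) with hTdef
  -- every word image lies in T
  have hfinset : {w : FreeMonoid A | (FreeMonoid.toList w).length < m}.Finite := by
    have : Finite (List A) → True := fun _ => trivial
    have h := List.finite_length_lt A m
    exact h.preimage (Function.Injective.injOn (fun a b hab => by
      exact FreeMonoid.toList.injective hab))
  set F : Finset (FreeMonoid A) := hfinset.toFinset with hFdef
  have hmemF : ∀ w : FreeMonoid A, w ∈ F ↔ (FreeMonoid.toList w).length < m := by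
    intro w; rw [hFdef, Set.Finite.mem_toFinset]; rfl
  have hT : ∀ n : ℕ, ∀ w : FreeMonoid A,
      (F.filter (fun v => v < w)).card ≤ n → φ (wordMonomial k w) ∈ T := by
    intro n
    induction n using Nat.strong_induction_on with
    | _ n IH =>
      intro w hw
      rcases le_or_gt m (FreeMonoid.toList w).length with hlen | hlen
      · rw [hzero w hlen]; exact T.zero_mem
      by_cases htip : IsTip w
      · have hsp := (hTip w).mp htip
        refine Submodule.span_le.mpr ?_ hsp
        rintro z ⟨v, hv, rfl⟩
        show φ (wordMonomial k v) ∈ T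
        rcases le_or_gt m (FreeMonoid.toList v).length with hlenv | hlenv
        · rw [hzero v hlenv]; exact T.zero_mem
        · -- v < w, both short
          have hvF : v ∈ F := (hmemF v).mpr hlenv
          have hwF : w ∈ F := (hmemF w).mpr hlen
          have hcard : (F.filter (fun u => u < v)).card <
              (F.filter (fun u => u < w)).card := by
            refine Finset.card_lt_card ?_
            rw [Finset.ssubset_iff_of_subset]
            · exact ⟨v, Finset.mem_filter.mpr ⟨hvF, hv⟩,
                fun hvv => lt_irrefl v (Finset.mem_filter.mp hvv).2⟩
            · intro u hu
              rw [Finset.mem_filter] at hu ⊢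
              exact ⟨hu.1, lt_trans hu.2 hv⟩
          exact IH (F.filter (fun u => u < v)).card (lt_of_lt_of_le hcard hw) v le_rfl
      · exact Submodule.subset_span ⟨⟨w, htip⟩, rfl⟩
  have hTall : ∀ w : FreeMonoid A, φ (wordMonomial k w) ∈ T := fun w =>
    hT F.card w (Finset.card_le_card (Finset.filter_subset _ _))
  -- span of all word images is ⊤
  have hTop : ∀ r : R, r ∈ T := by
    have hmonspan : ∀ x : FreeAlgebra k A,
        x ∈ Submodule.span k (Set.range (wordMonomial k (A := A))) := by
      have hmul : ∀ x y : FreeAlgebra k A,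
          x ∈ Submodule.span k (Set.range (wordMonomial k (A := A))) →
          y ∈ Submodule.span k (Set.range (wordMonomial k (A := A))) →
          x * y ∈ Submodule.span k (Set.range (wordMonomial k (A := A))) := by
        intro x y hx hy
        induction hx using Submodule.span_induction with
        | mem u hu =>
          obtain ⟨wu, rfl⟩ := hu
          induction hy using Submodule.span_induction with
          | mem v hv =>
            obtain ⟨wv, rfl⟩ := hv
            refine Submodule.subset_span ⟨wu * wv, ?_⟩
            simp only [wordMonomial, map_mul]
          | zero => rw [mul_zero]; exact Submodule.zero_mem _
          | add a b _ _ iha ihb =>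
            rw [mul_add]; exact Submodule.add_mem _ iha ihb
          | smul c a _ iha =>
            rw [mul_smul_comm]; exact Submodule.smul_mem _ c iha
        | zero => rw [zero_mul]; exact Submodule.zero_mem _
        | add a b _ _ iha ihb =>
          rw [add_mul]; exact Submodule.add_mem _ iha ihb
        | smul c a _ iha =>
          rw [smul_mul_assoc]; exact Submodule.smul_mem _ c iha
      intro x
      induction x using FreeAlgebra.induction with
      | grade0 r =>
        have h1 : (1 : FreeAlgebra k A) ∈
            Submodule.span k (Set.range (wordMonomial k (A := A))) :=
          Submodule.subset_span ⟨1, by simp [wordMonomial]⟩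
        have := Submodule.smul_mem _ r h1
        rwa [Algebra.smul_def, mul_one] at this
      | grade1 a =>
        exact Submodule.subset_span ⟨FreeMonoid.of a, by simp [wordMonomial]⟩
      | mul x y ihx ihy => exact hmul x y ihx ihy
      | add x y ihx ihy => exact Submodule.add_mem _ ihx ihy
    intro r
    obtain ⟨x, rfl⟩ := hsurj r
    have hx := hmonspan x
    have := Submodule.mem_map_of_mem (f := φ.toLinearMap) hx
    rw [Submodule.map_span] at this
    refine Submodule.span_le.mpr ?_ this
    rintro z ⟨u, ⟨wu, rfl⟩, rfl⟩
    exact hTall wu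
  constructor
  · -- linear independence
    rw [linearIndependent_iff']
    intro s g hsum i hi
    by_contra hgi
    -- the set of indices with nonzero coefficient
    set t := s.filter (fun j => g j ≠ 0) with htdef
    have hti : i ∈ t := Finset.mem_filter.mpr ⟨hi, hgi⟩
    have htne : t.Nonempty := ⟨i, hti⟩
    obtain ⟨i₀, hi₀t, hmax⟩ := Finset.exists_max_image t (fun j => j.1) htne
    have hgi₀ : g i₀ ≠ 0 := (Finset.mem_filter.mp hi₀t).2
    have hi₀s : i₀ ∈ s := (Finset.mem_filter.mp hi₀t).1
    -- split the sum
    have hsum' : g i₀ • φ (wordMonomial k i₀.1) +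
        ∑ j ∈ s.erase i₀, g j • φ (wordMonomial k j.1) = 0 :=
      (Finset.add_sum_erase s (fun j => g j • φ (wordMonomial k j.1)) hi₀s).trans hsum
    have hrest : ∑ j ∈ s.erase i₀, g j • φ (wordMonomial k j.1) ∈
        Submodule.span k ((fun v => φ (wordMonomial k v)) '' {v | v < i₀.1}) := by
      refine Submodule.sum_mem _ fun j hj => ?_
      by_cases hgj : g j = 0
      · rw [hgj, zero_smul]; exact Submodule.zero_mem _
      · have hjt : j ∈ t := Finset.mem_filter.mpr ⟨Finset.mem_of_mem_erase hj, hgj⟩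
        have hle : j.1 ≤ i₀.1 := hmax j hjt
        have hne : j.1 ≠ i₀.1 := by
          intro heq
          exact (Finset.ne_of_mem_erase hj) (Subtype.ext heq)
        refine Submodule.smul_mem _ _ (Submodule.subset_span ⟨j.1, ?_, rfl⟩)
        exact lt_of_le_of_ne hle hne
    have hi₀span : φ (wordMonomial k i₀.1) ∈
        Submodule.span k ((fun v => φ (wordMonomial k v)) '' {v | v < i₀.1}) := by
      have : φ (wordMonomial k i₀.1) =
          (-(g i₀)⁻¹) • ∑ j ∈ s.erase i₀, g j • φ (wordMonomial k j.1) := by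
        have h0 : g i₀ • φ (wordMonomial k i₀.1) =
            -∑ j ∈ s.erase i₀, g j • φ (wordMonomial k j.1) := by
          rw [eq_neg_iff_add_eq_zero]; exact hsum'
        rw [neg_smul, ← smul_neg, ← h0, smul_smul, inv_mul_cancel₀ hgi₀, one_smul]
      rw [this]
      exact Submodule.smul_mem _ _ hrest
    exact i₀.2 ((hTip i₀.1).mpr hi₀span)
  · -- spanning
    rw [eq_top_iff]
    intro r _
    exact hTop r
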